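/- (Determinant factorisation, block version.) Let R_1* > 0, let 0 ≤ a ≤ k, and let f_1,…,f_k, g_1,…,g_k : ℂ → ℂ be analytic on {x ∈ ℂ : |x| < R_1*}. Let x_1,…,x_k ∈ ℂ and R satisfy max_j |x_j| < R < R_1*. Then det(M) = (∏_{1≤j<m≤a}(x_m − x_j)) · (∏_{a<j<m≤k}(x_m − x_j)) · det(N), where M is the k×k matrix with entries M_{j,m} = f_m(x_j) for j ≤ a and M_{j,m} = g_m(x_j) for j > a, and N is the k×k matrix with entries N_{j,m} = (2πi)^{−1} ∮_{|ξ|=R} f_m(ξ)/∏_{ℓ=1}^{j}(ξ − x_ℓ) dξ for j ≤ a and N_{j,m} = (2πi)^{−1} ∮_{|ξ|=R} g_m(ξ)/∏_{ℓ=a+1}^{j}(ξ − x_ℓ) dξ for j > a, the contour being the positively oriented circle of radius R about the origin. -/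

import Mathlib

open scoped BigOperators

open Finset Polynomial in
lemma partial_frac {ι : Type*} [DecidableEq ι] (s : Finset ι) (hs : s.Nonempty)
    (v : ι → ℂ) (hv : Set.InjOn v s) (ξ : ℂ) (hξ : ∀ i ∈ s, ξ ≠ v i) :
    (∏ i ∈ s, (ξ - v i))⁻¹ =
      ∑ i ∈ s, (ξ - v i)⁻¹ * (∏ j ∈ s.erase i, (v i - v j))⁻¹ := by
  symm
  apply eq_inv_of_mul_eq_one_left
  rw [Finset.sum_mul]
  have key : ∀ i ∈ s, (ξ - v i)⁻¹ * (∏ j ∈ s.erase i, (v i - v j))⁻¹ * ∏ j ∈ s, (ξ - v j)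
      = eval ξ (Lagrange.basis s v i) := by
    intro i hi
    rw [← Finset.mul_prod_erase s _ hi]
    have h1 : ξ - v i ≠ 0 := sub_ne_zero.mpr (hξ i hi)
    rw [Lagrange.basis, eval_prod]
    simp only [Lagrange.basisDivisor, eval_mul, eval_sub, eval_C, eval_X]
    rw [Finset.prod_mul_distrib, ← Finset.prod_inv_distrib]
    rw [show ((ξ - v i)⁻¹ * ∏ j ∈ s.erase i, (v i - v j)⁻¹) *
          ((ξ - v i) * ∏ j ∈ s.erase i, (ξ - v j)) =
        ((ξ - v i)⁻¹ * (ξ - v i)) * ((∏ j ∈ s.erase i, (v i - v j)⁻¹) *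
          ∏ j ∈ s.erase i, (ξ - v j)) by ring, inv_mul_cancel₀ h1, one_mul]
  rw [Finset.sum_congr rfl key, ← eval_finset_sum, Lagrange.sum_basis hv hs, eval_one]
open Finset Complex Metric Real

lemma circleIntegral_finset_sum {ι : Type*} (s : Finset ι) (f : ι → ℂ → ℂ) (c : ℂ) (R : ℝ)
    (h : ∀ i ∈ s, CircleIntegrable (f i) c R) :
    (∮ z in C(c, R), ∑ i ∈ s, f i z) = ∑ i ∈ s, ∮ z in C(c, R), f i z := by
  simp only [circleIntegral, smul_sum]
  exact intervalIntegral.integral_finset_sum fun i hi => (circleIntegrable_iff R).mp (h i hi)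

lemma circleIntegral_div_prod {ι : Type*} [DecidableEq ι] {R1s R : ℝ} (hR0 : 0 < R)
    (hRR : R < R1s)
    (F : ℂ → ℂ) (hF : AnalyticOnNhd ℂ F {x : ℂ | ‖x‖ < R1s})
    (s : Finset ι) (hs : s.Nonempty) (v : ι → ℂ) (hv : Set.InjOn v s)
    (hvR : ∀ i ∈ s, ‖v i‖ < R) :
    (∮ ξ in C(0, R), F ξ / ∏ i ∈ s, (ξ - v i)) =
      ∑ i ∈ s, (2 * π * I) * ((∏ j ∈ s.erase i, (v i - v j))⁻¹ * F (v i)) := by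
  have hball : closedBall (0 : ℂ) R ⊆ {x : ℂ | ‖x‖ < R1s} := by
    intro ξ hξ
    simp only [Metric.mem_closedBall, Complex.dist_eq, sub_zero] at hξ
    exact lt_of_le_of_lt hξ hRR
  have hdiff : DifferentiableOn ℂ F (closedBall 0 R) := (hF.differentiableOn).mono hball
  have hFc : ContinuousOn F (sphere 0 R) := hdiff.continuousOn.mono sphere_subset_closedBall
  have hne : ∀ ξ ∈ sphere (0 : ℂ) R, ∀ i ∈ s, ξ ≠ v i := by
    intro ξ hξ i hi
    simp only [mem_sphere_iff_norm, sub_zero] at hξ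
    intro h
    rw [h] at hξ
    exact absurd hξ (by simpa using (hvR i hi).ne)
  have hgne : ∀ ξ ∈ sphere (0 : ℂ) R, ∀ i ∈ s, ξ - v i ≠ 0 := fun ξ hξ i hi =>
    sub_ne_zero.mpr (hne ξ hξ i hi)
  set g : ι → ℂ → ℂ := fun i ξ => (ξ - v i)⁻¹ * ((∏ j ∈ s.erase i, (v i - v j))⁻¹ * F ξ) with hg
  have hint : ∀ i ∈ s, CircleIntegrable (g i) 0 R := by
    intro i hi
    refine ContinuousOn.circleIntegrable hR0.le ?_
    exact (((continuousOn_id.sub continuousOn_const).inv₀ fun ξ hξ => hgne ξ hξ i hi).mul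
      (continuousOn_const.mul hFc))
  have heq : Set.EqOn (fun ξ => F ξ / ∏ i ∈ s, (ξ - v i)) (fun ξ => ∑ i ∈ s, g i ξ)
      (sphere 0 R) := by
    intro ξ hξ
    simp only [div_eq_mul_inv, hg]
    rw [partial_frac s hs v hv ξ (hne ξ hξ), Finset.mul_sum]
    exact Finset.sum_congr rfl fun i _ => by ring
  rw [circleIntegral.integral_congr hR0.le heq, circleIntegral_finset_sum s g 0 R hint]
  refine Finset.sum_congr rfl fun i hi => ?_
  have hw : v i ∈ ball (0 : ℂ) R := by
    simp only [mem_ball, Complex.dist_eq, sub_zero]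
    exact hvR i hi
  have := (hdiff.const_mul ((∏ j ∈ s.erase i, (v i - v j))⁻¹)).circleIntegral_sub_inv_smul hw
  simp only [smul_eq_mul] at this
  rw [show (∮ ξ in C(0, R), g i ξ) =
      ∮ ξ in C(0, R), (ξ - v i)⁻¹ * ((∏ j ∈ s.erase i, (v i - v j))⁻¹ * F ξ) from rfl, this]

/-- Lemma `lem:det_factorisation_2`: block version of the determinant
factorisation: the first `a` rows use the functions `f m`, the remaining rows the
functions `g m`. (Rows are indexed `1,…,k`; row `j` corresponds to `(j : ℕ) < a` resp.
`a ≤ (j : ℕ)` for the 0-based index.) -/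
theorem det_factorisation_block {k : ℕ} (hk : 0 < k) (R1s : ℝ) (hR1s : 0 < R1s)
    (a : ℕ) (ha : a ≤ k)
    (f g : Fin k → ℂ → ℂ)
    (hf : ∀ m, AnalyticOnNhd ℂ (f m) {x : ℂ | ‖x‖ < R1s})
    (hg : ∀ m, AnalyticOnNhd ℂ (g m) {x : ℂ | ‖x‖ < R1s})
    (x : Fin k → ℂ) (R : ℝ)
    (hx : ∀ j, ‖x j‖ < R) (hR : R < R1s) :
    Matrix.det (Matrix.of fun j m : Fin k =>
        if (j : ℕ) < a then f m (x j) else g m (x j)) =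
      (∏ p ∈ Finset.univ.filter
          (fun p : Fin k × Fin k => p.1 < p.2 ∧ (p.2 : ℕ) < a), (x p.2 - x p.1)) *
        (∏ p ∈ Finset.univ.filter
          (fun p : Fin k × Fin k => p.1 < p.2 ∧ a ≤ (p.1 : ℕ)), (x p.2 - x p.1)) *
        Matrix.det (Matrix.of fun j m : Fin k =>
          if (j : ℕ) < a then
            (2 * (Real.pi : ℂ) * Complex.I)⁻¹ *
              ∮ ξ in C(0, R), f m ξ / ∏ ℓ ∈ Finset.univ.filter (· ≤ j), (ξ - x ℓ)
          else
            (2 * (Real.pi : ℂ) * Complex.I)⁻¹ *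
              ∮ ξ in C(0, R), g m ξ /
                ∏ ℓ ∈ Finset.univ.filter (fun ℓ : Fin k => a ≤ (ℓ : ℕ) ∧ ℓ ≤ j),
                  (ξ - x ℓ)) := by
  classical
  set M : Matrix (Fin k) (Fin k) ℂ :=
    Matrix.of fun j m : Fin k => if (j : ℕ) < a then f m (x j) else g m (x j) with hM
  by_cases hdeg : ∃ p : Fin k × Fin k, p.1 ≠ p.2 ∧ x p.1 = x p.2 ∧
      (((p.1 : ℕ) < a ∧ (p.2 : ℕ) < a) ∨ (a ≤ (p.1 : ℕ) ∧ a ≤ (p.2 : ℕ)))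
  · -- degenerate case: two equal rows
    obtain ⟨⟨i, j⟩, hne, hxe, hb⟩ := hdeg
    have hM0 : M.det = 0 := by
      refine Matrix.det_zero_of_row_eq hne ?_
      funext m
      rcases hb with ⟨h1, h2⟩ | ⟨h1, h2⟩
      · simp [hM, Matrix.of_apply, if_pos h1, if_pos h2, hxe]
      · simp [hM, Matrix.of_apply, if_neg (not_lt.mpr h1), if_neg (not_lt.mpr h2), hxe]
    rw [hM0]
    rcases hb with ⟨h1, h2⟩ | ⟨h1, h2⟩
    · have hP : (∏ p ∈ Finset.univ.filter
          (fun p : Fin k × Fin k => p.1 < p.2 ∧ (p.2 : ℕ) < a), (x p.2 - x p.1)) = 0 := by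
        rcases lt_or_gt_of_ne hne with hlt | hgt
        · exact Finset.prod_eq_zero (Finset.mem_filter.mpr ⟨Finset.mem_univ _, hlt, h2⟩)
            (by simp [sub_eq_zero, hxe.symm])
        · exact Finset.prod_eq_zero (i := (j, i))
            (Finset.mem_filter.mpr ⟨Finset.mem_univ _, hgt, h1⟩)
            (by simp [sub_eq_zero, hxe])
      rw [hP, zero_mul, zero_mul]
    · have hP : (∏ p ∈ Finset.univ.filter
          (fun p : Fin k × Fin k => p.1 < p.2 ∧ a ≤ (p.1 : ℕ)), (x p.2 - x p.1)) = 0 := by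
        rcases lt_or_gt_of_ne hne with hlt | hgt
        · exact Finset.prod_eq_zero (Finset.mem_filter.mpr ⟨Finset.mem_univ _, hlt, h1⟩)
            (by simp [sub_eq_zero, hxe.symm])
        · exact Finset.prod_eq_zero (i := (j, i))
            (Finset.mem_filter.mpr ⟨Finset.mem_univ _, hgt, h2⟩)
            (by simp [sub_eq_zero, hxe])
      rw [hP, mul_zero, zero_mul]
  · -- main case
    set S : Fin k → Finset (Fin k) := fun j =>
      if (j : ℕ) < a then Finset.univ.filter (· ≤ j)
      else Finset.univ.filter (fun ℓ : Fin k => a ≤ (ℓ : ℕ) ∧ ℓ ≤ j) with hS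
    have hmem1 : ∀ {j ℓ : Fin k}, (j : ℕ) < a → (ℓ ∈ S j ↔ ℓ ≤ j) := by
      intro j ℓ h; simp [hS, h]
    have hmem2 : ∀ {j ℓ : Fin k}, ¬(j : ℕ) < a → (ℓ ∈ S j ↔ a ≤ (ℓ : ℕ) ∧ ℓ ≤ j) := by
      intro j ℓ h; simp [hS, h]
    have hjS : ∀ j : Fin k, j ∈ S j := by
      intro j
      by_cases hja : (j : ℕ) < a
      · exact (hmem1 hja).mpr le_rfl
      · exact (hmem2 hja).mpr ⟨not_lt.mp hja, le_rfl⟩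
    have hSle : ∀ j ℓ : Fin k, ℓ ∈ S j → ℓ ≤ j := by
      intro j ℓ hℓ
      by_cases hja : (j : ℕ) < a
      · exact (hmem1 hja).mp hℓ
      · exact ((hmem2 hja).mp hℓ).2
    have hblk : ∀ j ℓ : Fin k, ℓ ∈ S j →
        (((j : ℕ) < a ∧ (ℓ : ℕ) < a) ∨ (a ≤ (j : ℕ) ∧ a ≤ (ℓ : ℕ))) := by
      intro j ℓ hℓ
      by_cases hja : (j : ℕ) < a
      · exact Or.inl ⟨hja, lt_of_le_of_lt (Fin.le_def.mp ((hmem1 hja).mp hℓ)) hja⟩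
      · exact Or.inr ⟨not_lt.mp hja, ((hmem2 hja).mp hℓ).1⟩
    have hxnej : ∀ (j : Fin k), ∀ ℓ₁ ∈ S j, ∀ ℓ₂ ∈ S j, ℓ₁ ≠ ℓ₂ → x ℓ₁ ≠ x ℓ₂ := by
      intro j ℓ₁ h₁ ℓ₂ h₂ hne hxe
      refine hdeg ⟨(ℓ₁, ℓ₂), hne, hxe, ?_⟩
      rcases hblk j ℓ₁ h₁ with ⟨hj, h1⟩ | ⟨hj, h1⟩
      · rcases hblk j ℓ₂ h₂ with ⟨_, h2⟩ | ⟨hj2, _⟩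
        · exact Or.inl ⟨h1, h2⟩
        · exact absurd hj (not_lt.mpr hj2)
      · rcases hblk j ℓ₂ h₂ with ⟨hj2, _⟩ | ⟨_, h2⟩
        · exact absurd hj2 (not_lt.mpr hj)
        · exact Or.inr ⟨h1, h2⟩
    have hinj : ∀ j : Fin k, Set.InjOn x (S j) := by
      intro j ℓ₁ h₁ ℓ₂ h₂ hxe
      by_contra hne
      exact hxnej j ℓ₁ h₁ ℓ₂ h₂ hne hxe
    have h2pi : (2 * (Real.pi : ℂ) * Complex.I) ≠ 0 := by
      simp [Real.pi_ne_zero, Complex.I_ne_zero, Complex.ofReal_ne_zero]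
    have hR0 : 0 < R := lt_of_le_of_lt (norm_nonneg (x ⟨0, hk⟩)) (hx ⟨0, hk⟩)
    set L : Matrix (Fin k) (Fin k) ℂ := Matrix.of fun j ℓ : Fin k =>
      if ℓ ∈ S j then (∏ i ∈ (S j).erase ℓ, (x ℓ - x i))⁻¹ else 0 with hL
    set N : Matrix (Fin k) (Fin k) ℂ := Matrix.of fun j m : Fin k =>
      if (j : ℕ) < a then
        (2 * (Real.pi : ℂ) * Complex.I)⁻¹ *
          ∮ ξ in C(0, R), f m ξ / ∏ ℓ ∈ Finset.univ.filter (· ≤ j), (ξ - x ℓ)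
      else
        (2 * (Real.pi : ℂ) * Complex.I)⁻¹ *
          ∮ ξ in C(0, R), g m ξ /
            ∏ ℓ ∈ Finset.univ.filter (fun ℓ : Fin k => a ≤ (ℓ : ℕ) ∧ ℓ ≤ j),
              (ξ - x ℓ) with hN
    have hNLM : N = L * M := by
      ext j m
      rw [Matrix.mul_apply]
      have hrhs : ∀ hja : True, (∑ ℓ, L j ℓ * M ℓ m) =
          ∑ ℓ ∈ S j, (∏ i ∈ (S j).erase ℓ, (x ℓ - x i))⁻¹ * M ℓ m := by
        intro _
        simp only [hL, Matrix.of_apply, ite_mul, zero_mul]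
        rw [Finset.sum_ite_mem, Finset.univ_inter]
      rw [hrhs trivial]
      by_cases hja : (j : ℕ) < a
      · have hSj : Finset.univ.filter (· ≤ j) = S j := by simp [hS, hja]
        have hint := circleIntegral_div_prod hR0 hR (f m) (hf m) (S j) ⟨j, hjS j⟩ x
          (hinj j) (fun i _ => hx i)
        simp only [hN, Matrix.of_apply, if_pos hja]
        rw [hSj, hint, Finset.mul_sum]
        refine Finset.sum_congr rfl fun ℓ hℓ => ?_
        have hla : (ℓ : ℕ) < a := lt_of_le_of_lt (Fin.le_def.mp ((hmem1 hja).mp hℓ)) hja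
        rw [← mul_assoc, inv_mul_cancel₀ h2pi, one_mul]
        simp only [hM, Matrix.of_apply, if_pos hla]
      · have hSj : Finset.univ.filter (fun ℓ : Fin k => a ≤ (ℓ : ℕ) ∧ ℓ ≤ j) = S j := by
          simp [hS, hja]
        have hint := circleIntegral_div_prod hR0 hR (g m) (hg m) (S j) ⟨j, hjS j⟩ x
          (hinj j) (fun i _ => hx i)
        simp only [hN, Matrix.of_apply, if_neg hja]
        rw [hSj, hint, Finset.mul_sum]
        refine Finset.sum_congr rfl fun ℓ hℓ => ?_
        have hla : ¬(ℓ : ℕ) < a := not_lt.mpr ((hmem2 hja).mp hℓ).1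
        rw [← mul_assoc, inv_mul_cancel₀ h2pi, one_mul]
        simp only [hM, Matrix.of_apply, if_neg hla]
    set d : Fin k → ℂ := fun j => ∏ i ∈ (S j).erase j, (x j - x i) with hd
    have hLdet : L.det = (∏ j, d j)⁻¹ := by
      have htri : L.BlockTriangular OrderDual.toDual := by
        intro i j hij
        have hij' : i < j := hij
        have : j ∉ S i := fun hmem => absurd (hSle i j hmem) (not_le.mpr hij')
        simp [hL, this]
      rw [Matrix.det_of_lowerTriangular L htri, ← Finset.prod_inv_distrib]
      refine Finset.prod_congr rfl fun j _ => ?_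
      simp [hL, hjS j, hd]
    have hNdet : N.det = (∏ j, d j)⁻¹ * M.det := by rw [hNLM, Matrix.det_mul, hLdet]
    have hd0 : (∏ j, d j) ≠ 0 := by
      rw [Finset.prod_ne_zero_iff]
      intro j _
      rw [hd, Finset.prod_ne_zero_iff]
      intro i hi
      exact sub_ne_zero.mpr
        (hxnej j j (hjS j) i (Finset.mem_of_mem_erase hi)
          (Ne.symm (Finset.ne_of_mem_erase hi)))
    have hSe1 : ∀ j : Fin k, (j : ℕ) < a →
        (S j).erase j = Finset.univ.filter (· < j) := by
      intro j hja
      ext i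
      simp only [hS, if_pos hja, Finset.mem_erase, Finset.mem_filter, Finset.mem_univ,
        true_and, Fin.lt_def, Fin.le_def, ne_eq, Fin.ext_iff]
      omega
    have hSe2 : ∀ j : Fin k, ¬(j : ℕ) < a →
        (S j).erase j = Finset.univ.filter (fun i : Fin k => a ≤ (i : ℕ) ∧ i < j) := by
      intro j hja
      ext i
      simp only [hS, if_neg hja, Finset.mem_erase, Finset.mem_filter, Finset.mem_univ,
        true_and, Fin.lt_def, Fin.le_def, ne_eq, Fin.ext_iff]
      omega
    have hP1 : (∏ p ∈ Finset.univ.filter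
        (fun p : Fin k × Fin k => p.1 < p.2 ∧ (p.2 : ℕ) < a), (x p.2 - x p.1)) =
        ∏ j ∈ Finset.univ.filter (fun j : Fin k => (j : ℕ) < a), d j := by
      rw [Finset.prod_filter, Finset.prod_filter, ← Finset.univ_product_univ,
        Finset.prod_product_right]
      refine Finset.prod_congr rfl fun j _ => ?_
      by_cases hja : (j : ℕ) < a
      · rw [if_pos hja, hd]
        simp only
        rw [hSe1 j hja, Finset.prod_filter]
        refine Finset.prod_congr rfl fun i _ => ?_
        by_cases h : i < j <;> simp [h, hja]
      · rw [if_neg hja]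
        refine Finset.prod_eq_one fun i _ => ?_
        rw [if_neg]
        exact fun h => hja h.2
    have hP2 : (∏ p ∈ Finset.univ.filter
        (fun p : Fin k × Fin k => p.1 < p.2 ∧ a ≤ (p.1 : ℕ)), (x p.2 - x p.1)) =
        ∏ j ∈ Finset.univ.filter (fun j : Fin k => ¬(j : ℕ) < a), d j := by
      rw [Finset.prod_filter, Finset.prod_filter, ← Finset.univ_product_univ,
        Finset.prod_product_right]
      refine Finset.prod_congr rfl fun j _ => ?_
      by_cases hja : (j : ℕ) < a
      · rw [if_neg (not_not_intro hja)]
        refine Finset.prod_eq_one fun i _ => ?_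
        rw [if_neg]
        rintro ⟨h1, h2⟩
        have h1' : (i : ℕ) < (j : ℕ) := Fin.lt_def.mp h1
        have h2' : a ≤ (i : ℕ) := h2
        omega
      · rw [if_pos hja, hd]
        simp only
        rw [hSe2 j hja, Finset.prod_filter]
        refine Finset.prod_congr rfl fun i _ => ?_
        by_cases h : i < j
        · by_cases h2 : a ≤ (i : ℕ) <;> simp [h, h2]
        · simp [h]
    have hsplit : (∏ j ∈ Finset.univ.filter (fun j : Fin k => (j : ℕ) < a), d j) *
        ∏ j ∈ Finset.univ.filter (fun j : Fin k => ¬(j : ℕ) < a), d j = ∏ j, d j :=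
      Finset.prod_filter_mul_prod_filter_not Finset.univ _ _
    rw [hNdet, hP1, hP2, show
      (∏ j ∈ Finset.univ.filter (fun j : Fin k => (j : ℕ) < a), d j) *
        (∏ j ∈ Finset.univ.filter (fun j : Fin k => ¬(j : ℕ) < a), d j) *
        ((∏ j, d j)⁻¹ * M.det) =
      ((∏ j ∈ Finset.univ.filter (fun j : Fin k => (j : ℕ) < a), d j) *
        (∏ j ∈ Finset.univ.filter (fun j : Fin k => ¬(j : ℕ) < a), d j)) *
        (∏ j, d j)⁻¹ * M.det by ring, hsplit, mul_inv_cancel₀ hd0, one_mul]
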